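/- Under the abstract axioms (A1)–(A5), let u ∈ X and w ∈ ω(u). Then there exists an integer k(w) such that W(w¹, w²) = k(w) for all w¹, w² ∈ cl(γ(w)) with w¹ ≠ w². -/

import Mathlib

open Filter Topology Set


/-- W cannot increase along a pair trajectory. -/
theorem mono_aux {X : Type*} [TopologicalSpace X]
    (φ : ℝ → X → X)
    (hφc : Continuous fun p : ℝ × X => φ p.1 p.2)
    (hφadd : ∀ σ σ' x, φ (σ + σ') x = φ σ (φ σ' x))
    (S : Set (X × X)) (hScl : IsClosed S)
    (hΔS : ∀ x : X, (x, x) ∈ S)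
    (W : X → X → ℤ)
    (hWc : ContinuousOn (fun q : X × X => W q.1 q.2) Sᶜ)
    (hA4 : ∀ u v : X, (u, v) ∈ S → u ≠ v →
      ∃ ε > (0 : ℝ), ∀ σ : ℝ, σ ≠ 0 → |σ| < ε → (φ σ u, φ σ v) ∉ S)
    (hA5 : ∀ u v : X, (u, v) ∈ S → u ≠ v →
      ∃ ε > (0 : ℝ), ∀ σ σ' : ℝ, -ε < σ → σ < 0 → 0 < σ' → σ' < ε →
        W (φ σ' u) (φ σ' v) < W (φ σ u) (φ σ v))
    (u : X) (τ₀ t1 t2 : ℝ) (h12 : t1 ≤ t2)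
    (hP1 : (φ t1 u, φ (t1 + τ₀) u) ∉ S)
    (hP2 : (φ t2 u, φ (t2 + τ₀) u) ∉ S) :
    W (φ t2 u) (φ (t2 + τ₀) u) ≤ W (φ t1 u) (φ (t1 + τ₀) u) := by
  set P : ℝ → X × X := fun t => (φ t u, φ (t + τ₀) u) with hPdef
  have hPc : Continuous P := by
    apply Continuous.prodMk
    · exact hφc.comp (continuous_id.prodMk continuous_const)
    · exact hφc.comp ((continuous_id.add continuous_const).prodMk continuous_const)
  set N : ℝ → ℤ := fun t => W (φ t u) (φ (t + τ₀) u) with hNdef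
  -- local constancy off S
  have hloc : ∀ c : ℝ, P c ∉ S → ∀ᶠ r in nhds c, P r ∉ S ∧ N r = N c := by
    intro c hc
    have h1 : ContinuousAt (fun q : X × X => W q.1 q.2) (P c) :=
      hWc.continuousAt (hScl.isOpen_compl.mem_nhds hc)
    have h2 : ContinuousAt N c := h1.comp hPc.continuousAt
    have h3 : ∀ᶠ r in nhds c, N r = N c := by
      have := h2.tendsto (isOpen_discrete {N c} |>.mem_nhds rfl)
      exact this
    have h4 : ∀ᶠ r in nhds c, P r ∉ S :=
      hPc.continuousAt (hScl.isOpen_compl.mem_nhds hc)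
    exact h4.and h3
  -- P always off the diagonal when some P t ∉ S
  have hΔ : ∀ c : ℝ, φ c u = φ (c + τ₀) u → False := by
    intro c hc
    apply hP1
    have : φ t1 u = φ (t1 + τ₀) u := by
      have e1 : φ t1 u = φ (t1 - c) (φ c u) := by
        rw [← hφadd]; congr 1; ring
      have e2 : φ (t1 + τ₀) u = φ (t1 - c) (φ (c + τ₀) u) := by
        rw [← hφadd]; congr 1; ring
      rw [e1, e2, hc]
    show (φ t1 u, φ (t1 + τ₀) u) ∈ S
    rw [this]; exact hΔS _
  set T : Set ℝ := {t | t ∈ Icc t1 t2 ∧ ∀ s ∈ Icc t1 t, P s ∉ S → N s ≤ N t1} with hTdef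
  have hT1 : t1 ∈ T := by
    refine ⟨⟨le_refl _, h12⟩, ?_⟩
    intro s hs _
    have : s = t1 := le_antisymm hs.2 hs.1
    rw [this]
  have hTne : T.Nonempty := ⟨t1, hT1⟩
  have hTbdd : BddAbove T := ⟨t2, fun t ht => ht.1.2⟩
  set c := sSup T with hcdef
  have hc1 : t1 ≤ c := le_csSup hTbdd hT1
  have hc2 : c ≤ t2 := csSup_le hTne fun t ht => ht.1.2
  have hGlt : ∀ s, t1 ≤ s → s < c → P s ∉ S → N s ≤ N t1 := by
    intro s hs1 hs2 hsS
    obtain ⟨t, htT, hst⟩ := exists_lt_of_lt_csSup hTne hs2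
    exact htT.2 s ⟨hs1, le_of_lt hst⟩ hsS
  have hGc : ∀ s ∈ Icc t1 c, P s ∉ S → N s ≤ N t1 := by
    intro s hs hsS
    rcases lt_or_eq_of_le hs.2 with h | h
    · exact hGlt s hs.1 h hsS
    · subst h
      rcases eq_or_lt_of_le hc1 with h' | h'
      · rw [← h']
      · -- s = c > t1, P c ∉ S : use local constancy to step back
        obtain ⟨δ, hδ, hball⟩ := Metric.eventually_nhds_iff.mp (hloc c hsS)
        set r := max t1 (c - δ / 2) with hrdef
        have hr1 : t1 ≤ r := le_max_left _ _
        have hr2 : r < c := max_lt h' (by linarith)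
        have hrd : dist r c < δ := by
          rw [Real.dist_eq, abs_of_nonpos (by linarith)]
          have : c - δ / 2 ≤ r := le_max_right _ _
          linarith
        obtain ⟨hrS, hrN⟩ := hball hrd
        rw [← hrN]
        exact hGlt r hr1 hr2 hrS
  have hceq : c = t2 := by
    by_contra hne
    have hclt : c < t2 := lt_of_le_of_ne hc2 hne
    by_cases hcS : P c ∈ S
    · -- crossing point: use A4/A5 to advance
      have hne12 : φ c u ≠ φ (c + τ₀) u := fun h => hΔ c h
      obtain ⟨ε4, hε4, h4⟩ := hA4 _ _ hcS hne12
      obtain ⟨ε5, hε5, h5⟩ := hA5 _ _ hcS hne12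
      have ht1c : t1 < c := by
        rcases eq_or_lt_of_le hc1 with h | h
        · exfalso; apply hP1; rw [h]; exact hcS
        · exact h
      set ε := min ε4 ε5 with hεdef
      have hε : 0 < ε := lt_min hε4 hε5
      set δ := min ε (c - t1) with hδdef
      have hδ : 0 < δ := lt_min hε (by linarith)
      set σ := -(δ / 2) with hσdef
      have hσneg : σ < 0 := by rw [hσdef]; linarith
      have hσabs : |σ| < ε4 := by
        rw [hσdef, abs_neg, abs_of_pos (by linarith)]
        have : δ ≤ ε := min_le_left _ _
        have : ε ≤ ε4 := min_le_left _ _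
        linarith [min_le_left ε (c - t1)]
      have hcσS : P (c + σ) ∉ S := by
        have := h4 σ (ne_of_lt hσneg) hσabs
        have e1 : φ (c + σ) u = φ σ (φ c u) := by rw [← hφadd]; congr 1; ring
        have e2 : φ (c + σ + τ₀) u = φ σ (φ (c + τ₀) u) := by rw [← hφadd]; congr 1; ring
        show (φ (c + σ) u, φ (c + σ + τ₀) u) ∉ S
        rw [e1, e2]; exact this
      have hcσ : N (c + σ) ≤ N t1 := by
        apply hGc (c + σ) ⟨?_, ?_⟩ hcσS
        · have : δ ≤ c - t1 := min_le_right _ _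
          rw [hσdef]; linarith
        · linarith
      set t' := min (c + ε / 2) t2 with ht'def
      have hct' : c < t' := lt_min (by linarith) hclt
      have hT' : t' ∈ T := by
        refine ⟨⟨by linarith, min_le_right _ _⟩, ?_⟩
        intro s hs hsS
        rcases le_or_gt s c with h | h
        · exact hGc s ⟨hs.1, h⟩ hsS
        · -- c < s ≤ t' : use A5
          set σ'' := s - c with hσ''def
          have hσ''1 : 0 < σ'' := by rw [hσ''def]; linarith
          have hσ''2 : σ'' < ε5 := by
            have h1 : s ≤ c + ε / 2 := le_trans hs.2 (min_le_left _ _)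
            have h2 : ε ≤ ε5 := min_le_right _ _
            rw [hσ''def]; linarith
          have hσ5 : -ε5 < σ := by
            have h1 : δ ≤ ε := min_le_left _ _
            have h2 : ε ≤ ε5 := min_le_right _ _
            rw [hσdef]; linarith
          have := h5 σ σ'' hσ5 hσneg hσ''1 hσ''2
          have e1 : φ s u = φ σ'' (φ c u) := by rw [← hφadd]; congr 1; ring
          have e2 : φ (s + τ₀) u = φ σ'' (φ (c + τ₀) u) := by rw [← hφadd]; congr 1; ring
          have e3 : φ (c + σ) u = φ σ (φ c u) := by rw [← hφadd]; congr 1; ring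
          have e4 : φ (c + σ + τ₀) u = φ σ (φ (c + τ₀) u) := by rw [← hφadd]; congr 1; ring
          have hlt : N s < N (c + σ) := by
            show W (φ s u) (φ (s + τ₀) u) < W (φ (c + σ) u) (φ (c + σ + τ₀) u)
            rw [e1, e2, e3, e4]; exact this
          omega
      have := le_csSup hTbdd hT'
      linarith
    · -- P c ∉ S : use local constancy to advance
      obtain ⟨δ, hδ, hball⟩ := Metric.eventually_nhds_iff.mp (hloc c hcS)
      have hNc : N c ≤ N t1 := hGc c ⟨hc1, le_refl _⟩ hcS
      set t' := min (c + δ / 2) t2 with ht'def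
      have hct' : c < t' := lt_min (by linarith) hclt
      have hT' : t' ∈ T := by
        refine ⟨⟨by linarith, min_le_right _ _⟩, ?_⟩
        intro s hs hsS
        rcases le_or_gt s c with h | h
        · exact hGc s ⟨hs.1, h⟩ hsS
        · have hsd : dist s c < δ := by
            rw [Real.dist_eq, abs_of_pos (by linarith)]
            have : s ≤ c + δ / 2 := le_trans hs.2 (min_le_left _ _)
            linarith
          obtain ⟨_, hNs⟩ := hball hsd
          rw [hNs]; exact hNc
      have := le_csSup hTbdd hT'
      linarith
  have := hGc t2 (by rw [hceq]; exact ⟨h12, le_refl _⟩) hP2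
  exact this

theorem notS_aux {X : Type*} [TopologicalSpace X]
    (φ : ℝ → X → X)
    (hφc : Continuous fun p : ℝ × X => φ p.1 p.2)
    (hφadd : ∀ σ σ' x, φ (σ + σ') x = φ σ (φ σ' x))
    (S : Set (X × X)) (hScl : IsClosed S)
    (hΔS : ∀ x : X, (x, x) ∈ S)
    (W : X → X → ℤ)
    (hWc : ContinuousOn (fun q : X × X => W q.1 q.2) Sᶜ)
    (hA4 : ∀ u v : X, (u, v) ∈ S → u ≠ v →
      ∃ ε > (0 : ℝ), ∀ σ : ℝ, σ ≠ 0 → |σ| < ε → (φ σ u, φ σ v) ∉ S)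
    (hA5 : ∀ u v : X, (u, v) ∈ S → u ≠ v →
      ∃ ε > (0 : ℝ), ∀ σ σ' : ℝ, -ε < σ → σ < 0 → 0 < σ' → σ' < ε →
        W (φ σ' u) (φ σ' v) < W (φ σ u) (φ σ v))
    (u w : X)
    (hw : ∃ σs : ℕ → ℝ, Tendsto σs atTop atTop ∧
      Tendsto (fun n => φ (σs n) u) atTop (nhds w)) :
    ∀ a ∈ closure {x : X | ∃ σ : ℝ, x = φ σ w},
      ∀ b ∈ closure {x : X | ∃ σ : ℝ, x = φ σ w}, a ≠ b → (a, b) ∉ S := by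
  intro a ha b hb hab hS
  obtain ⟨σs, hσs, hσw⟩ := hw
  obtain ⟨ε4, hε4, h4⟩ := hA4 a b hS hab
  obtain ⟨ε5, hε5, h5⟩ := hA5 a b hS hab
  set ε := min ε4 ε5 with hεdef
  have hε : 0 < ε := lt_min hε4 hε5
  set σ : ℝ := -(ε / 2) with hσdef
  set σ' : ℝ := ε / 2 with hσ'def
  have hσabs : |σ| < ε4 := by
    rw [hσdef, abs_neg, abs_of_pos (by linarith)]
    have := min_le_left ε4 ε5; linarith
  have hσ'abs : |σ'| < ε4 := by
    rw [hσ'def, abs_of_pos (by linarith)]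
    have := min_le_left ε4 ε5; linarith
  have hqS : (φ σ a, φ σ b) ∉ S := h4 σ (by rw [hσdef]; intro h; linarith [neg_eq_zero.mp h]) hσabs
  have hpS : (φ σ' a, φ σ' b) ∉ S := h4 σ' (ne_of_gt (show (0:ℝ) < σ' by rw [hσ'def]; linarith)) hσ'abs
  have hpq : W (φ σ' a) (φ σ' b) < W (φ σ a) (φ σ b) := by
    apply h5 σ σ'
    · have := min_le_right ε4 ε5; rw [hσdef]; linarith
    · rw [hσdef]; linarith
    · rw [hσ'def]; linarith
    · have := min_le_right ε4 ε5; rw [hσ'def]; linarith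
  set p := W (φ σ' a) (φ σ' b) with hpdef
  set q := W (φ σ a) (φ σ b) with hqdef
  -- neighborhood where values persist
  have key : ∀ θ : ℝ, (φ θ a, φ θ b) ∉ S →
      ∀ᶠ z : X × X in nhds (a, b),
        (φ θ z.1, φ θ z.2) ∉ S ∧ W (φ θ z.1) (φ θ z.2) = W (φ θ a) (φ θ b) := by
    intro θ hθ
    have hF : Continuous fun z : X × X => (φ θ z.1, φ θ z.2) := by
      apply Continuous.prodMk
      · exact hφc.comp (continuous_const.prodMk continuous_fst)
      · exact hφc.comp (continuous_const.prodMk continuous_snd)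
    have h0 : ContinuousAt (fun q : X × X => W q.1 q.2) (φ θ a, φ θ b) :=
      hWc.continuousAt (hScl.isOpen_compl.mem_nhds
        (show ((φ θ a, φ θ b) : X × X) ∈ Sᶜ from hθ))
    have h1 : ContinuousAt ((fun q : X × X => W q.1 q.2) ∘
        (fun z : X × X => (φ θ z.1, φ θ z.2))) (a, b) :=
      ContinuousAt.comp (f := fun z : X × X => (φ θ z.1, φ θ z.2))
        (x := (a, b)) h0 hF.continuousAt
    have h2 : ∀ᶠ z : X × X in nhds (a, b), W (φ θ z.1) (φ θ z.2) = W (φ θ a) (φ θ b) := by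
      have := h1.tendsto (isOpen_discrete {W (φ θ a) (φ θ b)} |>.mem_nhds rfl)
      exact this
    have h3 : ∀ᶠ z : X × X in nhds (a, b), (φ θ z.1, φ θ z.2) ∉ S :=
      hF.continuousAt (hScl.isOpen_compl.mem_nhds
        (show ((φ θ a, φ θ b) : X × X) ∈ Sᶜ from hθ))
    exact h3.and h2
  have hV := (key σ hqS).and (key σ' hpS)
  obtain ⟨U₁, hU₁, U₂, hU₂, hUsub⟩ := mem_nhds_prod_iff.mp hV
  obtain ⟨U₁o, hU₁s, hU₁open, haU₁⟩ := mem_nhds_iff.mp hU₁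
  obtain ⟨U₂o, hU₂s, hU₂open, hbU₂⟩ := mem_nhds_iff.mp hU₂
  -- orbit points in U₁o, U₂o
  obtain ⟨x, hxU, α, hxα⟩ := mem_closure_iff_nhds.mp ha U₁o (hU₁open.mem_nhds haU₁)
  obtain ⟨y, hyU, β, hyβ⟩ := mem_closure_iff_nhds.mp hb U₂o (hU₂open.mem_nhds hbU₂)
  set τ₀ := β - α with hτ₀def
  -- pair limit
  have hlim : Tendsto (fun n => (φ (σs n) u, φ (σs n + τ₀) u)) atTop (nhds (w, φ τ₀ w)) := by
    apply Tendsto.prodMk_nhds hσw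
    have hcont : Continuous fun x : X => φ τ₀ x :=
      hφc.comp (continuous_const.prodMk continuous_id)
    have := (hcont.continuousAt.tendsto).comp hσw
    apply this.congr
    intro n
    show φ τ₀ (φ (σs n) u) = φ (σs n + τ₀) u
    rw [← hφadd]; congr 1; ring
  have hFα : Continuous fun z : X × X => (φ α z.1, φ α z.2) := by
    apply Continuous.prodMk
    · exact hφc.comp (continuous_const.prodMk continuous_fst)
    · exact hφc.comp (continuous_const.prodMk continuous_snd)
  set V' : Set (X × X) := (fun z : X × X => (φ α z.1, φ α z.2)) ⁻¹' (U₁o ×ˢ U₂o) with hV'def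
  have hV'mem : V' ∈ nhds (w, φ τ₀ w) := by
    apply (hFα.isOpen_preimage _ (hU₁open.prod hU₂open)).mem_nhds
    constructor
    · show φ α w ∈ U₁o
      rw [← hxα]; exact hxU
    · show φ α (φ τ₀ w) ∈ U₂o
      have : φ α (φ τ₀ w) = φ β w := by
        rw [← hφadd]; congr 1; rw [hτ₀def]; ring
      rw [this, ← hyβ]; exact hyU
  -- pick indices n < m
  have hev : ∀ᶠ n in atTop, (φ (σs n) u, φ (σs n + τ₀) u) ∈ V' := hlim.eventually_mem hV'mem
  obtain ⟨n, hn⟩ := hev.exists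
  have hev2 : ∀ᶠ m in atTop, (φ (σs m) u, φ (σs m + τ₀) u) ∈ V' ∧ σs n + ε < σs m :=
    hev.and (hσs.eventually_gt_atTop (σs n + ε))
  obtain ⟨m, hm, hmgt⟩ := hev2.exists
  -- from V'-membership extract values of W along the pair trajectory
  have hval : ∀ j : ℕ, (φ (σs j) u, φ (σs j + τ₀) u) ∈ V' →
      ((φ (σ' + α + σs j) u, φ (σ' + α + σs j + τ₀) u) ∉ S ∧
        W (φ (σ' + α + σs j) u) (φ (σ' + α + σs j + τ₀) u) = p) ∧
      ((φ (σ + α + σs j) u, φ (σ + α + σs j + τ₀) u) ∉ S ∧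
        W (φ (σ + α + σs j) u) (φ (σ + α + σs j + τ₀) u) = q) := by
    intro j hj
    have hz : (φ α (φ (σs j) u), φ α (φ (σs j + τ₀) u)) ∈ U₁ ×ˢ U₂ :=
      ⟨hU₁s hj.1, hU₂s hj.2⟩
    have := hUsub hz
    obtain ⟨⟨hq1, hq2⟩, ⟨hp1, hp2⟩⟩ := this
    have e1 : ∀ θ : ℝ, φ θ (φ α (φ (σs j) u)) = φ (θ + α + σs j) u := by
      intro θ; rw [← hφadd, ← hφadd]
    have e2 : ∀ θ : ℝ, φ θ (φ α (φ (σs j + τ₀) u)) = φ (θ + α + σs j + τ₀) u := by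
      intro θ; rw [← hφadd, ← hφadd]; congr 1; ring
    constructor
    · constructor
      · rw [← e1 σ', ← e2 σ']; exact hp1
      · rw [← e1 σ', ← e2 σ']; exact hp2
    · constructor
      · rw [← e1 σ, ← e2 σ]; exact hq1
      · rw [← e1 σ, ← e2 σ]; exact hq2
  obtain ⟨⟨hn1, hn2⟩, _⟩ := hval n hn
  obtain ⟨_, ⟨hm1, hm2⟩⟩ := hval m hm
  -- monotonicity contradiction
  have h12 : σ' + α + σs n ≤ σ + α + σs m := by
    rw [hσdef, hσ'def]; linarith
  have hmono := mono_aux φ hφc hφadd S hScl hΔS W hWc hA4 hA5 u τ₀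
    (σ' + α + σs n) (σ + α + σs m) h12 hn1 hm1
  rw [hn2, hm2] at hmono
  omega
theorem stmt_8 {X : Type*} [TopologicalSpace X] [CompactSpace X] [T2Space X]
    (φ : ℝ → X → X)
    (hφc : Continuous fun p : ℝ × X => φ p.1 p.2)
    (hφ0 : ∀ x, φ 0 x = x)
    (hφadd : ∀ σ σ' x, φ (σ + σ') x = φ σ (φ σ' x))
    (S : Set (X × X)) (hScl : IsClosed S)
    (hΔS : ∀ x : X, (x, x) ∈ S)
    (W : X → X → ℤ)
    -- (A1)
    (hWc : ContinuousOn (fun q : X × X => W q.1 q.2) Sᶜ)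
    (hWsym : ∀ u v : X, (u, v) ∉ S → W u v = W v u)
    -- (A2), (A3)
    (π : X → ℝ × ℝ) (hπc : Continuous π)
    (hA3 : ∀ u v : X, π u = π v → (u, v) ∈ S)
    -- (A4)
    (hA4 : ∀ u v : X, (u, v) ∈ S → u ≠ v →
      ∃ ε > (0 : ℝ), ∀ σ : ℝ, σ ≠ 0 → |σ| < ε → (φ σ u, φ σ v) ∉ S)
    -- (A5)
    (hA5 : ∀ u v : X, (u, v) ∈ S → u ≠ v →
      ∃ ε > (0 : ℝ), ∀ σ σ' : ℝ, -ε < σ → σ < 0 → 0 < σ' → σ' < ε →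
        W (φ σ' u) (φ σ' v) < W (φ σ u) (φ σ v))
    (u w : X)
    (hw : ∃ σs : ℕ → ℝ, Tendsto σs atTop atTop ∧
      Tendsto (fun n => φ (σs n) u) atTop (nhds w)) :
    ∃ k : ℤ, ∀ w₁ ∈ closure {x : X | ∃ σ : ℝ, x = φ σ w},
      ∀ w₂ ∈ closure {x : X | ∃ σ : ℝ, x = φ σ w},
        w₁ ≠ w₂ → W w₁ w₂ = k := by
  have hNS := notS_aux φ hφc hφadd S hScl hΔS W hWc hA4 hA5 u w hw
  -- trivial case: everything is a period
  by_cases hper : ∀ τ : ℝ, φ τ w = w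
  · refine ⟨0, ?_⟩
    intro w₁ hw₁ w₂ hw₂ hne
    exfalso
    have horb : {x : X | ∃ σ : ℝ, x = φ σ w} = {w} := by
      ext x
      simp only [mem_setOf_eq, mem_singleton_iff]
      constructor
      · rintro ⟨σ, rfl⟩; rw [hper]
      · intro h; rw [h]; exact ⟨0, (hφ0 w).symm⟩
    rw [horb, closure_singleton] at hw₁ hw₂
    exact hne (hw₁.trans hw₂.symm)
  push_neg at hper
  obtain ⟨τs, hτs⟩ := hper
  -- basic orbit facts
  have hOrbK : ∀ t : ℝ, φ t w ∈ closure {x : X | ∃ σ : ℝ, x = φ σ w} :=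
    fun t => subset_closure ⟨t, rfl⟩
  have hwK : w ∈ closure {x : X | ∃ σ : ℝ, x = φ σ w} :=
    subset_closure ⟨0, (hφ0 w).symm⟩
  have hneq : ∀ τ : ℝ, φ τ w ≠ w → ∀ t : ℝ, φ t w ≠ φ (t + τ) w := by
    intro τ hτ t heq
    apply hτ
    have h1 : φ τ w = φ (-t) (φ (t + τ) w) := by
      rw [← hφadd]; congr 1; ring
    have h2 : φ (-t) (φ t w) = w := by
      rw [← hφadd]; simp [hφ0]
    rw [h1, ← heq, h2]
  have hnegper : ∀ τ : ℝ, φ τ w ≠ w → φ (-τ) w ≠ w := by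
    intro τ hτ h
    apply hτ
    have := congrArg (φ τ) h
    rw [← hφadd] at this
    simpa [hφ0] using this.symm
  -- W is constant along the orbit-pair trajectories
  have orbitpair : ∀ τ : ℝ, φ τ w ≠ w → ∀ t : ℝ,
      W (φ t w) (φ (t + τ) w) = W w (φ τ w) := by
    intro τ hτ t
    have hpair : Continuous fun t : ℝ => ((φ t w, φ (t + τ) w) : X × X) := by
      apply Continuous.prodMk
      · exact hφc.comp (continuous_id.prodMk continuous_const)
      · exact hφc.comp ((continuous_id.add continuous_const).prodMk continuous_const)
    have hmaps : ∀ s : ℝ, ((φ s w, φ (s + τ) w) : X × X) ∈ Sᶜ :=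
      fun s => hNS _ (hOrbK s) _ (hOrbK (s + τ)) (hneq τ hτ s)
    have hg : ContinuousOn (fun t : ℝ => W (φ t w) (φ (t + τ) w)) Set.univ := by
      apply hWc.comp hpair.continuousOn
      intro s _
      exact hmaps s
    have := isPreconnected_univ.constant hg (mem_univ t) (mem_univ 0)
    rw [this]
    rw [show (0 : ℝ) + τ = τ by ring, hφ0]
  -- symmetry of the orbit value function
  have hsym : ∀ τ : ℝ, φ τ w ≠ w → W w (φ (-τ) w) = W w (φ τ w) := by
    intro τ hτ
    have hτ' := hnegper τ hτ
    have h1 : W w (φ (-τ) w) = W (φ (-τ) w) w :=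
      hWsym _ _ (hNS w hwK _ (hOrbK (-τ)) (Ne.symm hτ'))
    have h2 : φ (-τ + τ) w = w := by rw [show -τ + τ = (0:ℝ) by ring, hφ0]
    have h3 := orbitpair τ hτ (-τ)
    rw [h2] at h3
    rw [h1, h3]
  -- constancy on preconnected sets of non-periods
  have hconst : ∀ s : Set ℝ, IsPreconnected s → (∀ τ ∈ s, φ τ w ≠ w) →
      ∀ τ ∈ s, ∀ τ' ∈ s, W w (φ τ w) = W w (φ τ' w) := by
    intro s hs hsnp τ hτ τ' hτ'
    have hmap : Continuous fun τ : ℝ => ((w, φ τ w) : X × X) :=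
      continuous_const.prodMk (hφc.comp (continuous_id.prodMk continuous_const))
    have hg : ContinuousOn (fun τ : ℝ => W w (φ τ w)) s := by
      apply hWc.comp hmap.continuousOn
      intro x hx
      exact hNS w hwK _ (hOrbK x) (Ne.symm (hsnp x hx))
    exact hs.constant hg hτ hτ'
  -- the group of periods
  let G : AddSubgroup ℝ :=
    { carrier := {τ : ℝ | φ τ w = w}
      zero_mem' := hφ0 w
      add_mem' := by
        intro x y hx hy
        show φ (x + y) w = w
        rw [hφadd, hy, hx]
      neg_mem' := by
        intro x hx
        show φ (-x) w = w
        have : φ x w = w := hx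
        conv_lhs => rw [← this, ← hφadd]
        simp [hφ0] }
  have hGmem : ∀ τ : ℝ, τ ∈ G ↔ φ τ w = w := fun τ => Iff.rfl
  have hGclosed : IsClosed (G : Set ℝ) := by
    have : (G : Set ℝ) = (fun τ : ℝ => φ τ w) ⁻¹' {w} := rfl
    rw [this]
    exact isClosed_singleton.preimage (hφc.comp (continuous_id.prodMk continuous_const))
  -- the key constancy of τ ↦ W w (φ τ w) on non-periods
  have hf2 : ∀ τ : ℝ, φ τ w ≠ w → ∀ τ' : ℝ, φ τ' w ≠ w →
      W w (φ τ w) = W w (φ τ' w) := by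
    rcases G.dense_or_cyclic with hd | ⟨a, ha⟩
    · exfalso
      have huniv : (G : Set ℝ) = Set.univ := by
        rw [← hd.closure_eq, hGclosed.closure_eq]
      exact hτs (by rw [← hGmem]; rw [show (τs ∈ G) = (τs ∈ (G : Set ℝ)) from rfl, huniv]; trivial)
    · have hmem : ∀ τ : ℝ, φ τ w = w ↔ ∃ n : ℤ, n • a = τ := by
        intro τ
        rw [← hGmem, ha, AddSubgroup.mem_closure_singleton]
      by_cases ha0 : a = 0
      · -- only period is 0
        have hnp : ∀ τ : ℝ, τ ≠ 0 → φ τ w ≠ w := by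
          intro τ hτ0 h
          obtain ⟨n, hn⟩ := (hmem τ).mp h
          rw [ha0] at hn
          simp at hn
          exact hτ0 hn.symm
        have hpos : ∀ τ ∈ Ioi (0:ℝ), ∀ τ' ∈ Ioi (0:ℝ), W w (φ τ w) = W w (φ τ' w) :=
          hconst (Ioi 0) isPreconnected_Ioi (fun x hx => hnp x (ne_of_gt hx))
        have hred : ∀ τ : ℝ, φ τ w ≠ w → W w (φ τ w) = W w (φ |τ| w) := by
          intro τ hτ
          rcases abs_cases τ with ⟨h1, _⟩ | ⟨h1, _⟩
          · rw [h1]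
          · rw [h1, hsym τ hτ]
        intro τ hτ τ' hτ'
        have h0 : τ ≠ 0 := fun h => hτ (by rw [h, hφ0])
        have h0' : τ' ≠ 0 := fun h => hτ' (by rw [h, hφ0])
        rw [hred τ hτ, hred τ' hτ']
        exact hpos _ (abs_pos.mpr h0) _ (abs_pos.mpr h0')
      · -- periods are multiples of b := |a| > 0
        set b := |a| with hbdef
        have hb : 0 < b := abs_pos.mpr ha0
        have hbper : φ b w = w := by
          rcases abs_cases a with ⟨h1, _⟩ | ⟨h1, _⟩
          · rw [hbdef, h1, ← hGmem]
            rw [ha]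
            exact AddSubgroup.mem_closure_singleton.mpr ⟨1, one_smul _ _⟩
          · rw [hbdef, h1, ← hGmem]
            exact G.neg_mem (by rw [ha]; exact AddSubgroup.mem_closure_singleton.mpr ⟨1, one_smul _ _⟩)
        have hbmul : ∀ n : ℤ, φ (n • b) w = w := by
          intro n
          rw [← hGmem]
          exact AddSubgroup.zsmul_mem G (by rw [hGmem]; exact hbper) n
        have hIoonp : ∀ τ ∈ Ioo (0:ℝ) b, φ τ w ≠ w := by
          rintro τ ⟨hτ1, hτ2⟩ h
          obtain ⟨n, hn⟩ := (hmem τ).mp h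
          rw [zsmul_eq_mul] at hn
          have habs : |(n : ℝ)| * b = τ := by
            rw [hbdef, ← abs_mul, hn, abs_of_pos hτ1]
          rcases eq_or_ne n 0 with rfl | hn0
          · simp at habs; linarith
          · have : (1:ℝ) ≤ |(n:ℝ)| := by
              rw [← Int.cast_abs]
              exact_mod_cast Int.one_le_abs hn0
            nlinarith
        have hIoo : ∀ τ ∈ Ioo (0:ℝ) b, ∀ τ' ∈ Ioo (0:ℝ) b,
            W w (φ τ w) = W w (φ τ' w) :=
          hconst (Ioo 0 b) isPreconnected_Ioo hIoonp
        have hred : ∀ τ : ℝ, φ τ w ≠ w →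
            ∃ τ'' ∈ Ioo (0:ℝ) b, W w (φ τ w) = W w (φ τ'' w) := by
          intro τ hτ
          set τ'' := τ - b * ⌊τ / b⌋ with hτ''def
          have hfr : τ'' = b * Int.fract (τ / b) := by
            rw [hτ''def, Int.fract]
            field_simp
          have h0le : 0 ≤ τ'' := by
            rw [hfr]
            exact mul_nonneg hb.le (Int.fract_nonneg _)
          have hlt : τ'' < b := by
            rw [hfr]
            calc b * Int.fract (τ / b) < b * 1 := by
                  exact mul_lt_mul_of_pos_left (Int.fract_lt_one _) hb
              _ = b := mul_one b
          have heqφ : φ τ w = φ τ'' w := by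
            have : τ = τ'' + (⌊τ / b⌋ : ℤ) • b := by
              rw [hτ''def, zsmul_eq_mul]; ring
            rw [this, hφadd, hbmul]
          have hne0 : τ'' ≠ 0 := by
            intro h
            apply hτ
            rw [heqφ, h, hφ0]
          exact ⟨τ'', ⟨lt_of_le_of_ne h0le (Ne.symm hne0), hlt⟩, by rw [heqφ]⟩
        intro τ hτ τ' hτ'
        obtain ⟨τ₁, hτ₁, he₁⟩ := hred τ hτ
        obtain ⟨τ₂, hτ₂, he₂⟩ := hred τ' hτ'
        rw [he₁, he₂]
        exact hIoo _ hτ₁ _ hτ₂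
  -- conclusion
  refine ⟨W w (φ τs w), ?_⟩
  intro w₁ hw₁ w₂ hw₂ hne
  have hS12 : ((w₁, w₂) : X × X) ∉ S := hNS w₁ hw₁ w₂ hw₂ hne
  have h1 : ContinuousAt (fun z : X × X => W z.1 z.2) (w₁, w₂) :=
    hWc.continuousAt (hScl.isOpen_compl.mem_nhds hS12)
  have h2 : ∀ᶠ z : X × X in nhds (w₁, w₂), W z.1 z.2 = W w₁ w₂ := by
    have := h1.tendsto (isOpen_discrete {W w₁ w₂} |>.mem_nhds rfl)
    exact this
  have h3 : ∀ᶠ z : X × X in nhds (w₁, w₂), z ∉ S :=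
    hScl.isOpen_compl.mem_nhds hS12
  obtain ⟨U₁, hU₁, U₂, hU₂, hUsub⟩ := mem_nhds_prod_iff.mp (h3.and h2)
  obtain ⟨x, hxU, t, hxt⟩ := mem_closure_iff_nhds.mp hw₁ U₁ hU₁
  obtain ⟨y, hyU, s, hys⟩ := mem_closure_iff_nhds.mp hw₂ U₂ hU₂
  have hz := hUsub (Set.mk_mem_prod hxU hyU)
  obtain ⟨hzS, hzW⟩ := hz
  rw [hxt, hys] at hzS hzW
  have hne2 : φ t w ≠ φ s w := by
    intro h
    apply hzS
    show ((φ t w, φ s w) : X × X) ∈ S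
    rw [h]; exact hΔS _
  set τ := s - t with hτdef
  have hsw : φ s w = φ (t + τ) w := by congr 1; rw [hτdef]; ring
  have hτnp : φ τ w ≠ w := by
    intro h
    apply hne2
    rw [hsw, hφadd, h]
  rw [← hzW, hsw, orbitpair τ hτnp t]
  exact hf2 τ hτnp τs hτs
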